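/- Let 0 < α < β and let λ₁, λ₂ ∈ [α, β] satisfy αβ/(α + β - λ₁) ≤ λ₂ ≤ α + β - αβ/λ₁. Then there exists t ∈ [0,1] such that ν_t ≤ λ₁ ≤ λ₂ ≤ μ_t, 1/(λ₁-α) + 1/(λ₂-α) ≤ 1/(ν_t-α) + 1/(μ_t-α), and 1/(β-λ₁) + 1/(β-λ₂) ≤ 1/(β-ν_t) + 1/(β-μ_t) (with the convention 1/0 = +∞), where μ_t = tα+(1-t)β and ν_t = (t/α+(1-t)/β)^{-1}. -/

import Mathlib

noncomputable section
open ENNReal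

private lemma ennreal_aux (a b c d : ℝ) (ha : 0 < a) (hb : 0 < b) (hc : 0 < c) (hd : 0 < d)
    (h : 1 / a + 1 / b ≤ 1 / c + 1 / d) :
    (ENNReal.ofReal a)⁻¹ + (ENNReal.ofReal b)⁻¹ ≤
      (ENNReal.ofReal c)⁻¹ + (ENNReal.ofReal d)⁻¹ := by
  rw [← ENNReal.ofReal_inv_of_pos ha, ← ENNReal.ofReal_inv_of_pos hb,
    ← ENNReal.ofReal_inv_of_pos hc, ← ENNReal.ofReal_inv_of_pos hd,
    ← ENNReal.ofReal_add (by positivity) (by positivity),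
    ← ENNReal.ofReal_add (by positivity) (by positivity)]
  exact ENNReal.ofReal_le_ofReal (by simpa [one_div] using h)

set_option maxHeartbeats 2000000

/-- two-dimensional G-closure characterization. If `0 < α < β` and
`λ₁, λ₂ ∈ [α,β]` satisfy `αβ/(α+β-λ₁) ≤ λ₂ ≤ α+β-αβ/λ₁`, then there is `t ∈ [0,1]`
such that `ν_t ≤ λ₁ ≤ λ₂ ≤ μ_t` and the two reciprocal-sum inequalities hold (with the
convention `1/0 = +∞`, encoded in `ℝ≥0∞`), where `μ_t = tα+(1-t)β` and
`ν_t = (t/α+(1-t)/β)⁻¹`. -/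
theorem gClosure_dim2 (α β lam₁ lam₂ : ℝ) (hα : 0 < α) (hαβ : α < β)
    (hord : lam₁ ≤ lam₂)
    (h₁ : lam₁ ∈ Set.Icc α β) (h₂ : lam₂ ∈ Set.Icc α β)
    (hl : α * β / (α + β - lam₁) ≤ lam₂) (hr : lam₂ ≤ α + β - α * β / lam₁) :
    ∃ t ∈ Set.Icc (0 : ℝ) 1,
      (t / α + (1 - t) / β)⁻¹ ≤ lam₁ ∧ lam₁ ≤ lam₂ ∧ lam₂ ≤ t * α + (1 - t) * β ∧
      (ENNReal.ofReal (lam₁ - α))⁻¹ + (ENNReal.ofReal (lam₂ - α))⁻¹ ≤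
        (ENNReal.ofReal ((t / α + (1 - t) / β)⁻¹ - α))⁻¹ +
          (ENNReal.ofReal (t * α + (1 - t) * β - α))⁻¹ ∧
      (ENNReal.ofReal (β - lam₁))⁻¹ + (ENNReal.ofReal (β - lam₂))⁻¹ ≤
        (ENNReal.ofReal (β - (t / α + (1 - t) / β)⁻¹))⁻¹ +
          (ENNReal.ofReal (β - (t * α + (1 - t) * β)))⁻¹ := by
  obtain ⟨h1a, h1b⟩ := h₁
  obtain ⟨h2a, h2b⟩ := h₂
  have hβ : (0:ℝ) < β := hα.trans hαβ
  have h1pos : 0 < lam₁ := lt_of_lt_of_le hα h1a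
  -- polynomial forms of the hypotheses
  have hden : 0 < α + β - lam₁ := by linarith
  have H1 : 0 ≤ (α + β) * lam₂ - lam₁ * lam₂ - α * β := by
    have := (div_le_iff₀ hden).mp hl
    nlinarith
  have H2 : 0 ≤ (α + β) * lam₁ - lam₁ * lam₂ - α * β := by
    have hr' : α * β / lam₁ ≤ α + β - lam₂ := by linarith
    have := (div_le_iff₀ h1pos).mp hr'
    nlinarith
  rcases eq_or_lt_of_le h1a with he1 | hlt1
  · -- λ₁ = α, hence λ₂ = α; take t = 1
    have hl2 : lam₂ = α := by nlinarith
    refine ⟨1, ⟨zero_le_one, le_refl 1⟩, ?_, hord, ?_, ?_, ?_⟩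
    · have : (1 / α + (1 - 1) / β)⁻¹ = α := by
        field_simp
        ring
      rw [this, ← he1]
    · simp [hl2]
    · have : (1 / α + (1 - 1) / β)⁻¹ = α := by field_simp; ring
      rw [this]
      simp only [sub_self, ENNReal.ofReal_zero, ENNReal.inv_zero]
      exact le_top.trans_eq (by simp)
    · have : (1 / α + (1 - 1) / β)⁻¹ = α := by field_simp; ring
      rw [this, ← he1, hl2]
      norm_num
  rcases eq_or_lt_of_le h2b with he2 | hlt2
  · -- λ₂ = β, hence λ₁ = β; take t = 0
    have hl1 : lam₁ = β := by
      have : α * β ≤ (α + β) * lam₁ - lam₁ * lam₂ := by linarith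
      rw [he2] at this
      have : α * β ≤ α * lam₁ := by nlinarith
      have := le_of_mul_le_mul_left this hα
      linarith
    refine ⟨0, ⟨le_refl 0, zero_le_one⟩, ?_, hord, ?_, ?_, ?_⟩
    · have : ((0:ℝ) / α + (1 - 0) / β)⁻¹ = β := by field_simp; ring
      rw [this, hl1]
    · simp [he2]
    · have : ((0:ℝ) / α + (1 - 0) / β)⁻¹ = β := by field_simp; ring
      rw [this, hl1, he2]
      norm_num
    · have : ((0:ℝ) / α + (1 - 0) / β)⁻¹ = β := by field_simp; ring
      rw [this]
      simp only [sub_self, ENNReal.ofReal_zero, ENNReal.inv_zero]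
      exact le_top.trans_eq (by simp)
  -- interior case: α < λ₁ ≤ λ₂ < β
  have hl2a : α < lam₂ := lt_of_lt_of_le hlt1 hord
  have h2pos : 0 < lam₂ := lt_trans hα hl2a
  have h1b' : lam₁ < β := lt_of_le_of_lt hord hlt2
  have hva : 0 < lam₁ * lam₂ - α ^ 2 := by nlinarith
  have hvb : 0 < β ^ 2 - lam₁ * lam₂ := by nlinarith
  obtain ⟨s, hs⟩ : ∃ x : ℝ, x = max (α * β / lam₁)
      (α * ((α + β) * (lam₁ + lam₂) - lam₁ * lam₂ - 2 * (α * β) - α ^ 2) /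
        (lam₁ * lam₂ - α ^ 2)) := ⟨_, rfl⟩
  have hs1 : α * β / lam₁ ≤ s := hs ▸ le_max_left _ _
  have hs2 : α * ((α + β) * (lam₁ + lam₂) - lam₁ * lam₂ - 2 * (α * β) - α ^ 2) /
      (lam₁ * lam₂ - α ^ 2) ≤ s := hs ▸ le_max_right _ _
  have hsa : α < s := by
    refine lt_of_lt_of_le ?_ hs1
    rw [lt_div_iff₀ h1pos]
    nlinarith
  have hspos : 0 < s := lt_trans hα hsa
  have hss2 : s ≤ α + β - lam₂ := by
    rw [hs]
    apply max_le
    · rw [div_le_iff₀ h1pos]; nlinarith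
    · rw [div_le_iff₀ hva]; linarith [mul_nonneg (by linarith : (0:ℝ) ≤ lam₂ - α) H2]
  have hsb : s < β := lt_of_le_of_lt hss2 (by linarith)
  have hkeyf : α * ((α + β) * (lam₁ + lam₂) - lam₁ * lam₂ - 2 * (α * β) - α ^ 2) ≤
      s * (lam₁ * lam₂ - α ^ 2) := by
    have := (div_le_iff₀ hva).mp hs2; linarith
  have hkeyg : s * (β ^ 2 - lam₁ * lam₂) ≤
      β * (β ^ 2 + 2 * (α * β) - (α + β) * (lam₁ + lam₂) + lam₁ * lam₂) := by
    rcases max_choice (α * β / lam₁)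
        (α * ((α + β) * (lam₁ + lam₂) - lam₁ * lam₂ - 2 * (α * β) - α ^ 2) /
          (lam₁ * lam₂ - α ^ 2)) with h | h <;> rw [← hs] at h <;> rw [h]
    · rw [div_mul_eq_mul_div, div_le_iff₀ h1pos]
      linarith [mul_nonneg (mul_nonneg hβ.le (by linarith : (0:ℝ) ≤ β - lam₁)) H2]
    · rw [div_mul_eq_mul_div, div_le_iff₀ hva]
      linarith [mul_nonneg (mul_nonneg (by linarith : (0:ℝ) ≤ β - α) H1) H2]
  -- the parameter t
  refine ⟨(s - α) / (β - α), ⟨div_nonneg (by linarith) (by linarith), by rw [div_le_one (by linarith)]; linarith⟩, ?_⟩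
  have hba : β - α ≠ 0 := by linarith
  have e1 : ((s - α) / (β - α) / α + (1 - (s - α) / (β - α)) / β)⁻¹ = α * β / s := by
    rw [show (s - α) / (β - α) / α + (1 - (s - α) / (β - α)) / β = s / (α * β) by
      field_simp; ring]
    rw [inv_div]
  have e2 : (s - α) / (β - α) * α + (1 - (s - α) / (β - α)) * β = α + β - s := by
    field_simp; ring
  rw [e1, e2]
  refine ⟨?_, hord, by linarith, ?_, ?_⟩
  · rw [div_le_iff₀ hspos]
    have := (div_le_iff₀ h1pos).mp hs1
    nlinarith
  · -- first reciprocal inequality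
    have hc : 0 < α * β / s - α := by
      rw [lt_sub_iff_add_lt, zero_add, lt_div_iff₀ hspos]
      nlinarith
    apply ennreal_aux _ _ _ _ (by linarith) (by linarith) hc (by linarith)
    have hrw : α * β / s - α = α * (β - s) / s := by field_simp
    have habs : 0 < α * (β - s) := mul_pos hα (by linarith)
    have hrhs : 1 / (α * β / s - α) + 1 / (β - s) = (s + α) / (α * (β - s)) := by
      rw [hrw, one_div_div]
      rw [div_add_div _ _ (ne_of_gt habs) (by linarith : β - s ≠ 0)]
      rw [div_eq_div_iff (ne_of_gt (mul_pos habs (by linarith : (0:ℝ) < β - s))) (ne_of_gt habs)]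
      ring
    rw [show α + β - s - α = β - s from by ring, hrhs, div_add_div _ _ (by linarith : lam₁ - α ≠ 0) (by linarith : lam₂ - α ≠ 0),
      div_le_div_iff₀ (mul_pos (by linarith : (0:ℝ) < lam₁ - α) (by linarith : (0:ℝ) < lam₂ - α)) habs]
    linarith [hkeyf]
  · -- second reciprocal inequality
    have hc : 0 < β - α * β / s := by
      rw [sub_pos, div_lt_iff₀ hspos]
      nlinarith
    apply ennreal_aux _ _ _ _ (by linarith) (by linarith) hc (by linarith)
    have hrw : β - α * β / s = β * (s - α) / s := by field_simp
    have hrw2 : β - (α + β - s) = s - α := by ring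
    have hbsa : 0 < β * (s - α) := mul_pos hβ (by linarith)
    have hrhs : 1 / (β - α * β / s) + 1 / (β - (α + β - s)) = (s + β) / (β * (s - α)) := by
      rw [hrw, hrw2, one_div_div]
      rw [div_add_div _ _ (ne_of_gt hbsa) (by linarith : s - α ≠ 0)]
      rw [div_eq_div_iff (ne_of_gt (mul_pos hbsa (by linarith : (0:ℝ) < s - α))) (ne_of_gt hbsa)]
      ring
    rw [hrhs, div_add_div _ _ (by linarith : β - lam₁ ≠ 0) (by linarith : β - lam₂ ≠ 0),
      div_le_div_iff₀ (mul_pos (by linarith : (0:ℝ) < β - lam₁) (by linarith : (0:ℝ) < β - lam₂)) hbsa]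
    linarith [hkeyg]
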